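/- For every b : ZMod 2, one has ∑ y : ZMod 2, (Complex.I) ^ (y.val) * (-1 : ℂ) ^ ((y * b).val) = Complex.exp (Real.pi * Complex.I / 4) * Real.sqrt 2 * (-Complex.I) ^ (b.val). (Identity underlying the (ω) rewrite rule: summing the phases i^y (-1)^{y·b} over the path variable y yields a global phase ω = e^{iπ/4}, a normalization factor √2, and a residual conditional phase (-i)^b.) -/

import Mathlib

lemma zmod2_sum (f : ZMod 2 → ℂ) : ∑ y : ZMod 2, f y = f 0 + f 1 := by
  rw [show (Finset.univ : Finset (ZMod 2)) = {0, 1} by decide]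
  simp

lemma exp_pi_div_four : Complex.exp ((Real.pi : ℂ) * Complex.I / 4) * (Real.sqrt 2 : ℂ) = 1 + Complex.I := by
  have h : (Real.pi : ℂ) * Complex.I / 4 = ((Real.pi / 4 : ℝ) : ℂ) * Complex.I := by
    push_cast; ring
  rw [h, Complex.exp_mul_I, ← Complex.ofReal_cos, ← Complex.ofReal_sin,
    Real.cos_pi_div_four, Real.sin_pi_div_four]
  have h2 : (Real.sqrt 2 : ℂ) * Real.sqrt 2 = 2 := by
    norm_cast
    exact Real.mul_self_sqrt (by norm_num)
  push_cast
  linear_combination ((1 + Complex.I) / 2) * h2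

theorem interference_omega_rule (b : ZMod 2) :
    ∑ y : ZMod 2, (Complex.I) ^ (y.val) * (-1 : ℂ) ^ ((y * b).val) =
      Complex.exp ((Real.pi : ℂ) * Complex.I / 4) * (Real.sqrt 2 : ℂ) *
        (-Complex.I) ^ (b.val) := by
  rw [exp_pi_div_four, zmod2_sum]
  obtain rfl | rfl : b = 0 ∨ b = 1 := (by decide : ∀ x : ZMod 2, x = 0 ∨ x = 1) b <;> simp [ZMod.val_one] <;> linear_combination Complex.I_sq
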